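/- Suppose A ∈ SPD and −C ∈ SPD. Let D = [[A, 0], [0, −C]] and G = [[−B, −C], [−C, 0]] in ℝ^{2n×2n}. If ((y,x), λ) with v, w ≥ 0 solves SEiCP(G,D), i.e., λD(y;x) − G(y;x) = (w;v), eᵀ(y;x) = 1, yᵀw + xᵀv = 0, (x,y,v,w,λ) ≥ 0, then v = 0, y = λx, and λ > 0. -/

import Mathlib

open Matrix

theorem seicp_GD_structure (n : ℕ) (A B C : Matrix (Fin n) (Fin n) ℝ)
    (hA : A.PosDef) (hC : (-C).PosDef) (hB : B.IsSymm)
    (x y v w : Fin n → ℝ) (l : ℝ)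
    (D : Matrix (Fin n ⊕ Fin n) (Fin n ⊕ Fin n) ℝ)
    (hD : D = Matrix.fromBlocks A 0 0 (-C))
    (G : Matrix (Fin n ⊕ Fin n) (Fin n ⊕ Fin n) ℝ)
    (hG : G = Matrix.fromBlocks (-B) (-C) (-C) 0)
    (heq : l • D.mulVec (Sum.elim y x) - G.mulVec (Sum.elim y x) = Sum.elim w v)
    (hsum : (∑ i, y i) + (∑ i, x i) = 1)
    (hcomp : y ⬝ᵥ w + x ⬝ᵥ v = 0)
    (hx : ∀ i, 0 ≤ x i) (hy : ∀ i, 0 ≤ y i)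
    (hv : ∀ i, 0 ≤ v i) (hw : ∀ i, 0 ≤ w i) (hl : 0 ≤ l) :
    v = 0 ∧ y = l • x ∧ 0 < l := by
  subst hD hG
  rw [Matrix.fromBlocks_mulVec, Matrix.fromBlocks_mulVec] at heq
  -- bottom block equation : C *ᵥ (y - l • x) = v
  have hbot : C.mulVec (y - l • x) = v := by
    funext i
    have h := congrFun heq (Sum.inr i)
    simp only [Pi.sub_apply, Pi.smul_apply, Sum.elim_inr, Pi.add_apply,
      Matrix.zero_mulVec, Matrix.neg_mulVec, Pi.zero_apply, Pi.neg_apply,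
      Sum.elim_comp_inl, Sum.elim_comp_inr, smul_eq_mul] at h
    rw [Matrix.mulVec_sub, Matrix.mulVec_smul]
    simp only [Pi.sub_apply, Pi.smul_apply, smul_eq_mul]
    linarith
  -- top block equation : l • (A *ᵥ y) + B *ᵥ y + C *ᵥ x = w
  have htop : ∀ i, l * A.mulVec y i + B.mulVec y i + C.mulVec x i = w i := by
    intro i
    have h := congrFun heq (Sum.inl i)
    simp only [Pi.sub_apply, Pi.smul_apply, Sum.elim_inl, Pi.add_apply,
      Matrix.zero_mulVec, Matrix.neg_mulVec, Pi.zero_apply, Pi.neg_apply,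
      Sum.elim_comp_inl, Sum.elim_comp_inr, smul_eq_mul] at h
    linarith
  have hyw : (0:ℝ) ≤ y ⬝ᵥ w := Finset.sum_nonneg fun i _ => mul_nonneg (hy i) (hw i)
  have hxv : (0:ℝ) ≤ x ⬝ᵥ v := Finset.sum_nonneg fun i _ => mul_nonneg (hx i) (hv i)
  have hyv : (0:ℝ) ≤ y ⬝ᵥ v := Finset.sum_nonneg fun i _ => mul_nonneg (hy i) (hv i)
  have hxv0 : x ⬝ᵥ v = 0 := by linarith
  have hyw0 : y ⬝ᵥ w = 0 := by linarith
  -- z := y - l • x is zero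
  have hz : y - l • x = 0 := by
    by_contra hz
    have hpos := hC.dotProduct_mulVec_pos (x := y - l • x) hz
    rw [star_trivial, Matrix.neg_mulVec, dotProduct_neg, hbot] at hpos
    have hzv : (y - l • x) ⬝ᵥ v = y ⬝ᵥ v - l * (x ⬝ᵥ v) := by
      rw [sub_dotProduct, smul_dotProduct, smul_eq_mul]
    rw [hzv, hxv0] at hpos
    linarith
  have hylx : y = l • x := by rwa [sub_eq_zero] at hz
  have hv0 : v = 0 := by rw [← hbot, hz, Matrix.mulVec_zero]
  refine ⟨hv0, hylx, ?_⟩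
  rcases lt_or_eq_of_le hl with h | h
  · exact h
  · exfalso
    have hy0 : y = 0 := by rw [hylx, ← h, zero_smul]
    have hsx : (∑ i, x i) = 1 := by
      simp [hy0] at hsum; linarith [hsum]
    have hxne : x ≠ 0 := by
      intro h0
      rw [h0] at hsx
      simp at hsx
    have hw' : C.mulVec x = w := by
      funext i
      have := htop i
      rw [hy0, ← h] at this
      simpa using this
    have hpos := hC.dotProduct_mulVec_pos hxne
    rw [star_trivial, Matrix.neg_mulVec, dotProduct_neg, hw'] at hpos
    have hxw : (0:ℝ) ≤ x ⬝ᵥ w := Finset.sum_nonneg fun i _ => mul_nonneg (hx i) (hw i)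
    linarith
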